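/- A polyhedron P ⊆ ℝ^n is a box of reals (i.e., P = {x ∈ ℝ^n : a_i ≤ x_i ≤ b_i for all i} for some a ∈ (ℝ ∪ {−∞})^n and b ∈ (ℝ ∪ {+∞})^n with a ≤ b) if and only if P is both L₂♮-convex and a multimodular polyhedron. -/

import Mathlib

open Pointwise

/-- A polyhedron in `ℝⁿ` is the solution set of a finite system of linear
inequalities. -/
def IsPolyhedron {n : ℕ} (P : Set (Fin n → ℝ)) : Prop :=
  ∃ (m : ℕ) (A : Fin m → Fin n → ℝ) (b : Fin m → ℝ),
    P = {x | ∀ i, ∑ j, A i j * x j ≤ b i}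

/-- A nonempty polyhedron `P ⊆ ℝⁿ` is L-convex if it is closed under
componentwise max/min and under translation by real multiples of `𝟏`. -/
def IsLConvexPoly {n : ℕ} (P : Set (Fin n → ℝ)) : Prop :=
  IsPolyhedron P ∧ P.Nonempty ∧
  (∀ x ∈ P, ∀ y ∈ P, x ⊔ y ∈ P ∧ x ⊓ y ∈ P) ∧
  (∀ x ∈ P, ∀ μ : ℝ, (x + fun _ => μ) ∈ P)

/-- A polyhedron `P ⊆ ℝⁿ` is L♮-convex if it is the intersection of an
L-convex polyhedron `Q ⊆ ℝ^{n+1}` with the hyperplane "last coordinate 0". -/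
def IsLNatConvexPoly {n : ℕ} (P : Set (Fin n → ℝ)) : Prop :=
  IsPolyhedron P ∧
  ∃ Q : Set (Fin (n + 1) → ℝ), IsLConvexPoly Q ∧
    P = {x : Fin n → ℝ | Fin.snoc x (0 : ℝ) ∈ Q}

/-- A polyhedron is L₂♮-convex if it is the Minkowski sum of two L♮-convex
polyhedra. -/
def IsL2NatConvexPoly {n : ℕ} (P : Set (Fin n → ℝ)) : Prop :=
  IsPolyhedron P ∧
  ∃ P₁ P₂ : Set (Fin n → ℝ), IsLNatConvexPoly P₁ ∧ IsLNatConvexPoly P₂ ∧ P = P₁ + P₂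

/-- The bidiagonal matrix `D` with `d_{ii} = 1` and `d_{i+1,i} = -1`. -/
def matD (n : ℕ) : Matrix (Fin n) (Fin n) ℝ :=
  Matrix.of fun i j => if i = j then 1 else if (i : ℕ) = (j : ℕ) + 1 then -1 else 0

/-- A polyhedron is multimodular if it is the image of an L♮-convex polyhedron
under the matrix `D`. -/
def IsMultimodularPoly {n : ℕ} (P : Set (Fin n → ℝ)) : Prop :=
  ∃ Q : Set (Fin n → ℝ), IsLNatConvexPoly Q ∧ P = (matD n).mulVec '' Q

/-- `P ⊆ ℝⁿ` is a box of reals: `P = {x : a_i ≤ x_i ≤ b_i}` for some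
`a ∈ (ℝ ∪ {-∞})ⁿ` and `b ∈ (ℝ ∪ {+∞})ⁿ` with `a ≤ b`. -/
def IsRealBox {n : ℕ} (P : Set (Fin n → ℝ)) : Prop :=
  ∃ a b : Fin n → EReal,
    (∀ i, a i ≠ ⊤) ∧ (∀ i, b i ≠ ⊥) ∧ (∀ i, a i ≤ b i) ∧
    P = {x : Fin n → ℝ | ∀ i, a i ≤ (x i : EReal) ∧ (x i : EReal) ≤ b i}

namespace RBAux

variable {n : ℕ}




def psum (x : Fin n → ℝ) : Fin n → ℝ := fun i => ∑ j ∈ Finset.univ.filter (· ≤ i), x j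

def dvec (y : Fin n → ℝ) : Fin n → ℝ := fun i =>
  y i - (if h : (i : ℕ) = 0 then 0 else y ⟨(i : ℕ) - 1, by omega⟩)

lemma filter_le_zero (i : Fin n) (h : (i : ℕ) = 0) :
    Finset.univ.filter (· ≤ i) = {i} := by
  ext j
  simp only [Finset.mem_filter, Finset.mem_univ, true_and, Finset.mem_singleton]
  constructor
  · intro hj; exact Fin.ext (by have := Fin.le_def.mp hj; omega)
  · intro hj; exact hj ▸ le_rfl

lemma filter_le_succ (i : Fin n) (m : ℕ) (h : (i : ℕ) = m + 1) :
    Finset.univ.filter (· ≤ i) =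
      insert i (Finset.univ.filter (· ≤ (⟨m, by omega⟩ : Fin n))) := by
  ext j
  simp only [Finset.mem_filter, Finset.mem_univ, true_and, Finset.mem_insert]
  constructor
  · intro hj
    rcases eq_or_ne j i with rfl | hne
    · exact Or.inl rfl
    · have h1 := Fin.le_def.mp hj
      have h2 : (j : ℕ) ≠ (i : ℕ) := fun hh => hne (Fin.ext hh)
      exact Or.inr (Fin.le_def.mpr (by simp; omega))
  · rintro (rfl | hj)
    · exact le_rfl
    · have := Fin.le_def.mp hj
      exact Fin.le_def.mpr (by simp at this; omega)

lemma psum_zero (x : Fin n → ℝ) (i : Fin n) (h : (i : ℕ) = 0) : psum x i = x i := by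
  rw [psum, filter_le_zero i h, Finset.sum_singleton]

lemma psum_succ (x : Fin n → ℝ) (i : Fin n) (m : ℕ) (h : (i : ℕ) = m + 1) :
    psum x i = x i + psum x ⟨m, by omega⟩ := by
  rw [psum, filter_le_succ i m h, Finset.sum_insert]
  · rfl
  · simp only [Finset.mem_filter, Finset.mem_univ, true_and]
    intro hle
    have := Fin.le_def.mp hle
    simp at this; omega

lemma dvec_psum (x : Fin n → ℝ) : dvec (psum x) = x := by
  funext i
  rcases Nat.eq_zero_or_eq_succ_pred (i : ℕ) with h | h
  · rw [dvec, dif_pos h, psum_zero x i h, sub_zero]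
  · set m := (i : ℕ) - 1 with hm
    have hi : (i : ℕ) = m + 1 := h
    rw [dvec, dif_neg (by omega), psum_succ x i m hi]
    have e : (⟨m, by omega⟩ : Fin n) = ⟨(i : ℕ) - 1, by omega⟩ := rfl
    rw [e]
    ring_nf

lemma psum_dvec (y : Fin n → ℝ) : psum (dvec y) = y := by
  funext i
  induction' hi : (i : ℕ) with m ih generalizing i
  · rw [psum_zero _ i hi]
    rw [dvec]; rw [dif_pos hi, sub_zero]
  · have hd : dvec y i = y i - y ⟨m, by omega⟩ := by
      rw [dvec, dif_neg (by omega)]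
      congr 2
      simp only [Fin.mk.injEq]
      omega
    rw [psum_succ (dvec y) i m hi, ih ⟨m, by omega⟩ rfl, hd]
    ring

lemma mulVec_matD (y : Fin n → ℝ) : (matD n).mulVec y = dvec y := by
  funext i
  have hsplit : ∀ j : Fin n, matD n i j * y j =
      (if j = i then y j else 0) + (if (i : ℕ) = (j : ℕ) + 1 then -(y j) else 0) := by
    intro j
    simp only [matD, Matrix.of_apply]
    by_cases h1 : i = j
    · subst h1
      simp [show ¬((i : ℕ) = (i : ℕ) + 1) from by omega]
    · have h2 : ¬(j = i) := fun hh => h1 hh.symm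
      rw [if_neg h1, if_neg h2]
      by_cases h3 : (i : ℕ) = (j : ℕ) + 1
      · simp [h3]
      · simp [h3]
  show ∑ j, matD n i j * y j = dvec y i
  rw [Finset.sum_congr rfl fun j _ => hsplit j, Finset.sum_add_distrib,
    Finset.sum_ite_eq' Finset.univ i y]
  rw [if_pos (Finset.mem_univ i)]
  rcases Nat.eq_zero_or_eq_succ_pred (i : ℕ) with h | h
  · rw [dvec, dif_pos h]
    rw [Finset.sum_eq_zero fun j _ => if_neg (by omega), sub_zero, add_zero]
  · set m := (i : ℕ) - 1 with hm
    have hi : (i : ℕ) = m + 1 := h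
    rw [dvec, dif_neg (by omega)]
    rw [Finset.sum_eq_single (⟨m, by omega⟩ : Fin n)]
    · rw [if_pos (by simp [hi])]
      have e : (⟨m, by omega⟩ : Fin n) = ⟨(i : ℕ) - 1, by omega⟩ := rfl
      rw [e]
      ring_nf
    · intro j _ hj
      refine if_neg fun hc => hj (Fin.ext ?_)
      simp; omega
    · intro hc; exact absurd (Finset.mem_univ _) hc





/-- lower estimate for partial sums -/
lemma psum_ge {x p : Fin n → ℝ} {ε : ℝ} (hε : 0 ≤ ε) (h : ∀ j, x j - ε ≤ p j)
    (i : Fin n) : psum x i - n * ε ≤ psum p i := by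
  set F := Finset.univ.filter (· ≤ i) with hF
  have hcard : (F.card : ℝ) ≤ n := by
    have := Finset.card_le_univ F
    rw [Fintype.card_fin] at this
    exact_mod_cast this
  have h2 : ∑ j ∈ F, (x j - ε) ≤ ∑ j ∈ F, p j := Finset.sum_le_sum fun j _ => h j
  rw [Finset.sum_sub_distrib, Finset.sum_const, nsmul_eq_mul] at h2
  rw [psum, psum, ← hF]
  nlinarith

/-- difference estimate for partial sums -/
lemma psum_sub_ge {x p : Fin n → ℝ} {ε : ℝ} (hε : 0 ≤ ε) (h : ∀ j, x j - ε ≤ p j)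
    {i t : Fin n} (hit : i ≤ t) :
    (psum x t - psum x i) - n * ε ≤ psum p t - psum p i := by
  have hsub : Finset.univ.filter (· ≤ i) ⊆ Finset.univ.filter (· ≤ t) := by
    intro j hj
    simp only [Finset.mem_filter, Finset.mem_univ, true_and] at *
    exact hj.trans hit
  have key : ∀ z : Fin n → ℝ, psum z t - psum z i =
      ∑ j ∈ Finset.univ.filter (· ≤ t) \ Finset.univ.filter (· ≤ i), z j := by
    intro z
    have := Finset.sum_sdiff (f := z) hsub
    rw [psum, psum]
    linarith
  rw [key x, key p]
  set S := Finset.univ.filter (· ≤ t) \ Finset.univ.filter (· ≤ i) with hS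
  have hc : (S.card : ℝ) ≤ n := by
    have := Finset.card_le_univ S
    rw [Fintype.card_fin] at this
    exact_mod_cast this
  calc (∑ j ∈ S, x j) - n * ε ≤ (∑ j ∈ S, x j) - S.card * ε := by nlinarith
    _ = ∑ j ∈ S, (x j - ε) := by rw [Finset.sum_sub_distrib, Finset.sum_const, nsmul_eq_mul]
    _ ≤ ∑ j ∈ S, p j := Finset.sum_le_sum fun j _ => h j

lemma isClosed_of_isPolyhedron {P : Set (Fin n → ℝ)} (h : IsPolyhedron P) :
    IsClosed P := by
  obtain ⟨m, A, b, rfl⟩ := h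
  have : {x : Fin n → ℝ | ∀ i, ∑ j, A i j * x j ≤ b i} =
      ⋂ i, {x : Fin n → ℝ | ∑ j, A i j * x j ≤ b i} := by
    ext x; simp [Set.mem_iInter]
  rw [this]
  refine isClosed_iInter fun i => ?_
  have hcont : Continuous fun x : Fin n → ℝ => ∑ j, A i j * x j :=
    continuous_finset_sum _ fun j _ => (continuous_const.mul (continuous_apply j))
  exact isClosed_le hcont continuous_const

/-- generic polyhedron with EReal two-sided bounds on linear forms -/
lemma isPolyhedron_of_bounds {N k : ℕ} (c : Fin k → Fin N → ℝ) (a b : Fin k → EReal)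
    (ha : ∀ i, a i ≠ ⊤) (hb : ∀ i, b i ≠ ⊥) :
    IsPolyhedron {x : Fin N → ℝ |
      ∀ i, a i ≤ (↑(∑ j, c i j * x j) : EReal) ∧ (↑(∑ j, c i j * x j) : EReal) ≤ b i} := by
  refine ⟨k + k,
    Fin.addCases (fun i j => if a i = ⊥ then 0 else -(c i j))
      (fun i j => if b i = ⊤ then 0 else c i j),
    Fin.addCases (fun i => if a i = ⊥ then 0 else -(a i).toReal)
      (fun i => if b i = ⊤ then 0 else (b i).toReal), ?_⟩
  ext x
  simp only [Set.mem_setOf_eq]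
  have hlow : ∀ i : Fin k, (a i ≤ (↑(∑ j, c i j * x j) : EReal)) ↔
      (∑ j, (if a i = ⊥ then 0 else -(c i j)) * x j ≤ (if a i = ⊥ then 0 else -(a i).toReal)) := by
    intro i
    by_cases h : a i = ⊥
    · simp [h]
    · simp only [if_neg h]
      have hco : ((a i).toReal : EReal) = a i := EReal.coe_toReal (ha i) h
      have hsum : ∑ j, -(c i j) * x j = -(∑ j, c i j * x j) := by
        rw [← Finset.sum_neg_distrib]; exact Finset.sum_congr rfl fun j _ => by ring
      have hiff : a i ≤ (↑(∑ j, c i j * x j) : EReal) ↔ (a i).toReal ≤ ∑ j, c i j * x j := by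
        constructor
        · intro hh; exact EReal.coe_le_coe_iff.mp (by rw [hco]; exact hh)
        · intro hh; rw [← hco]; exact EReal.coe_le_coe_iff.mpr hh
      rw [hsum, hiff]
      constructor
      · intro hh; linarith
      · intro hh; linarith
  have hhigh : ∀ i : Fin k, ((↑(∑ j, c i j * x j) : EReal) ≤ b i) ↔
      (∑ j, (if b i = ⊤ then 0 else c i j) * x j ≤ (if b i = ⊤ then 0 else (b i).toReal)) := by
    intro i
    by_cases h : b i = ⊤
    · simp [h]
    · simp only [if_neg h]
      have hco : ((b i).toReal : EReal) = b i := EReal.coe_toReal h (hb i)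
      constructor
      · intro hh; exact EReal.coe_le_coe_iff.mp (by rw [hco]; exact hh)
      · intro hh; rw [← hco]; exact EReal.coe_le_coe_iff.mpr hh
  constructor
  · intro hx i
    refine Fin.addCases (fun i0 => ?_) (fun i0 => ?_) i
    · simp only [Fin.addCases_left]
      exact (hlow i0).mp (hx i0).1
    · simp only [Fin.addCases_right]
      exact (hhigh i0).mp (hx i0).2
  · intro hx i
    constructor
    · refine (hlow i).mpr ?_
      have := hx (Fin.castAdd k i)
      simpa only [Fin.addCases_left] using this
    · refine (hhigh i).mpr ?_
      have := hx (Fin.natAdd k i)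
      simpa only [Fin.addCases_right] using this





lemma snoc_add_const (x : Fin n → ℝ) (c μ : ℝ) :
    (Fin.snoc x c + fun _ => μ) = Fin.snoc (x + fun _ => μ) (c + μ) := by
  funext j
  refine Fin.lastCases ?_ (fun i => ?_) j <;>
    simp [Pi.add_apply, Fin.snoc_last, Fin.snoc_castSucc]

lemma snoc_sup (x y : Fin n → ℝ) (c d : ℝ) :
    ((Fin.snoc x c : Fin (n+1) → ℝ) ⊔ Fin.snoc y d) = Fin.snoc (x ⊔ y) (max c d) := by
  funext j
  refine Fin.lastCases ?_ (fun i => ?_) j <;>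
    simp [Pi.sup_apply, Fin.snoc_last, Fin.snoc_castSucc]

lemma snoc_inf (x y : Fin n → ℝ) (c d : ℝ) :
    ((Fin.snoc x c : Fin (n+1) → ℝ) ⊓ Fin.snoc y d) = Fin.snoc (x ⊓ y) (min c d) := by
  funext j
  refine Fin.lastCases ?_ (fun i => ?_) j <;>
    simp [Pi.inf_apply, Fin.snoc_last, Fin.snoc_castSucc]

lemma lnat_nonempty {S : Set (Fin n → ℝ)} (hS : IsLNatConvexPoly S) : S.Nonempty := by
  obtain ⟨-, Q, ⟨-, ⟨z, hz⟩, -, htr⟩, rfl⟩ := hS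
  refine ⟨fun i => z (Fin.castSucc i) - z (Fin.last n), ?_⟩
  have hw := htr z hz (-(z (Fin.last n)))
  have : Fin.snoc (fun i => z (Fin.castSucc i) - z (Fin.last n)) (0 : ℝ) =
      (z + fun _ => -(z (Fin.last n))) := by
    funext j
    refine Fin.lastCases ?_ (fun i => ?_) j
    · simp [Fin.snoc_last]
    · simp [Fin.snoc_castSucc]
      ring
  simpa [Set.mem_setOf_eq, this] using hw

lemma lnat_ops {S : Set (Fin n → ℝ)} (hS : IsLNatConvexPoly S) :
    ∀ p ∈ S, ∀ q ∈ S, ∀ μ : ℝ, 0 ≤ μ →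
      ((p + fun _ => μ) ⊓ q ∈ S ∧ p ⊔ (q - fun _ => μ) ∈ S) := by
  obtain ⟨-, Q, ⟨-, -, hlat, htr⟩, rfl⟩ := hS
  intro p hp q hq μ hμ
  simp only [Set.mem_setOf_eq] at hp hq ⊢
  have hpμ : Fin.snoc (p + fun _ => μ) (μ : ℝ) ∈ Q := by
    have := htr _ hp μ
    rwa [snoc_add_const, zero_add] at this
  constructor
  · have := (hlat _ hpμ _ hq).2
    rwa [snoc_inf, min_eq_right hμ] at this
  · have h1 := (hlat _ hpμ _ hq).1
    rw [snoc_sup, max_eq_left hμ] at h1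
    have h2 := htr _ h1 (-μ)
    rw [snoc_add_const] at h2
    have e1 : μ + -μ = 0 := by ring
    have e2 : (((p + fun _ => μ) ⊔ q) + fun _ => -μ) = p ⊔ (q - fun _ => μ) := by
      funext j
      simp only [Pi.add_apply, Pi.sup_apply, Pi.sub_apply]
      rw [show (p j + μ) ⊔ q j + -μ = ((p j + μ) ⊔ q j) - μ by ring]
      have : (p j + μ) ⊔ q j - μ = (p j + μ - μ) ⊔ (q j - μ) := by
        rcases le_total (p j + μ) (q j) with h | h
        · rw [sup_eq_right.mpr h, sup_eq_right.mpr (by linarith)]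
        · rw [sup_eq_left.mpr h, sup_eq_left.mpr (by linarith)]
      rw [this, add_sub_cancel_right]
    rwa [e1, e2] at h2

lemma lnat_sup_mem {S : Set (Fin n → ℝ)} (hS : IsLNatConvexPoly S) :
    ∀ p ∈ S, ∀ q ∈ S, p ⊔ q ∈ S := by
  intro p hp q hq
  have := (lnat_ops hS p hp q hq 0 le_rfl).2
  have e : (q - fun _ => (0:ℝ)) = q := by funext j; simp
  rwa [e] at this

lemma lnat_inf_mem {S : Set (Fin n → ℝ)} (hS : IsLNatConvexPoly S) :
    ∀ p ∈ S, ∀ q ∈ S, p ⊓ q ∈ S := by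
  intro p hp q hq
  have := (lnat_ops hS p hp q hq 0 le_rfl).1
  have e : (p + fun _ => (0:ℝ)) = p := by funext j; simp
  rwa [e] at this

/-- combine coordinatewise lower witnesses in a sublattice -/
lemma exists_ge_of_sup_closed {S : Set (Fin n → ℝ)} (hne : S.Nonempty)
    (hsup : ∀ p ∈ S, ∀ q ∈ S, p ⊔ q ∈ S) (r : Fin n → ℝ)
    (h : ∀ t, ∃ p ∈ S, r t ≤ p t) : ∃ p ∈ S, ∀ t, r t ≤ p t := by
  have key : ∀ I : Finset (Fin n), ∃ p ∈ S, ∀ t ∈ I, r t ≤ p t := by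
    intro I
    induction I using Finset.induction_on with
    | empty => obtain ⟨p, hp⟩ := hne; exact ⟨p, hp, fun t ht => absurd ht (by simp)⟩
    | insert _ _ hnotmem ih =>
      obtain ⟨p, hp, hple⟩ := ih
      rename_i t0 I'
      obtain ⟨w, hw, hwt⟩ := h t0
      refine ⟨p ⊔ w, hsup p hp w hw, fun t ht => ?_⟩
      rcases Finset.mem_insert.mp ht with rfl | ht'
      · exact hwt.trans (by rw [Pi.sup_apply]; exact le_sup_right)
      · exact (hple t ht').trans (by rw [Pi.sup_apply]; exact le_sup_left)
  obtain ⟨p, hp, hple⟩ := key Finset.univ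
  exact ⟨p, hp, fun t => hple t (Finset.mem_univ t)⟩

lemma exists_le_of_inf_closed {S : Set (Fin n → ℝ)} (hne : S.Nonempty)
    (hinf : ∀ p ∈ S, ∀ q ∈ S, p ⊓ q ∈ S) (r : Fin n → ℝ)
    (h : ∀ t, ∃ p ∈ S, p t ≤ r t) : ∃ p ∈ S, ∀ t, p t ≤ r t := by
  have key : ∀ I : Finset (Fin n), ∃ p ∈ S, ∀ t ∈ I, p t ≤ r t := by
    intro I
    induction I using Finset.induction_on with
    | empty => obtain ⟨p, hp⟩ := hne; exact ⟨p, hp, fun t ht => absurd ht (by simp)⟩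
    | insert _ _ hnotmem ih =>
      obtain ⟨p, hp, hple⟩ := ih
      rename_i t0 I'
      obtain ⟨w, hw, hwt⟩ := h t0
      refine ⟨p ⊓ w, hinf p hp w hw, fun t ht => ?_⟩
      rcases Finset.mem_insert.mp ht with rfl | ht'
      · exact le_trans (by rw [Pi.inf_apply]; exact inf_le_right) hwt
      · exact le_trans (by rw [Pi.inf_apply]; exact inf_le_left) (hple t ht')
  obtain ⟨p, hp, hple⟩ := key Finset.univ
  exact ⟨p, hp, fun t => hple t (Finset.mem_univ t)⟩





/-- Lemma W: a point of Q with small i-th coordinate and all differences near-optimal. -/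
lemma lemW {Q : Set (Fin n → ℝ)}
    (hjoin : ∀ p ∈ Q, ∀ q ∈ Q, ∀ μ : ℝ, 0 ≤ μ → p ⊔ (q - fun _ => μ) ∈ Q)
    (y : Fin n → ℝ)
    (Hpair : ∀ δ : ℝ, 0 < δ → ∀ i t : Fin n, ∃ v ∈ Q, y t - y i - δ ≤ v t - v i)
    (Hhigh : ∀ δ : ℝ, 0 < δ → ∀ i, ∃ v ∈ Q, v i ≤ y i + δ)
    {δ : ℝ} (hδ : 0 < δ) (i : Fin n) :
    ∃ u ∈ Q, u i ≤ y i + δ ∧ ∀ t, y t - y i - δ ≤ u t - u i := by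
  have key : ∀ I : Finset (Fin n),
      ∃ u ∈ Q, u i ≤ y i + δ ∧ ∀ t ∈ I, y t - y i - δ ≤ u t - u i := by
    intro I
    induction I using Finset.induction_on with
    | empty =>
      obtain ⟨v, hv, hvi⟩ := Hhigh δ hδ i
      exact ⟨v, hv, hvi, fun t ht => absurd ht (by simp)⟩
    | insert _ _ hnotmem ih =>
      obtain ⟨u, hu, hui, hud⟩ := ih
      rename_i t0 I'
      obtain ⟨v, hv, hvd⟩ := Hpair δ hδ i t0
      rcases le_total (u i) (v i) with hcase | hcase
      · -- shift v down to match u at i : new = u ⊔ (v - (v i - u i))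
        refine ⟨u ⊔ (v - fun _ => (v i - u i)), hjoin u hu v hv _ (by linarith), ?_, ?_⟩
        · have : (u ⊔ (v - fun _ => (v i - u i))) i = u i := by
            simp only [Pi.sup_apply, Pi.sub_apply]
            rw [sup_eq_left.mpr (by linarith)]
          rw [this]; exact hui
        · intro t ht
          have hnewi : (u ⊔ (v - fun _ => (v i - u i))) i = u i := by
            simp only [Pi.sup_apply, Pi.sub_apply]
            rw [sup_eq_left.mpr (by linarith)]
          rw [hnewi]
          rcases Finset.mem_insert.mp ht with rfl | ht'
          · have : v t - (v i - u i) ≤ (u ⊔ (v - fun _ => (v i - u i))) t := by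
              simp only [Pi.sup_apply, Pi.sub_apply]; exact le_sup_right
            have h2 := hvd
            linarith
          · have : u t ≤ (u ⊔ (v - fun _ => (v i - u i))) t := by
              simp only [Pi.sup_apply, Pi.sub_apply]; exact le_sup_left
            have h2 := hud t ht'
            linarith
      · -- shift u down to match v at i : new = v ⊔ (u - (u i - v i))
        refine ⟨v ⊔ (u - fun _ => (u i - v i)), hjoin v hv u hu _ (by linarith), ?_, ?_⟩
        · have : (v ⊔ (u - fun _ => (u i - v i))) i = v i := by
            simp only [Pi.sup_apply, Pi.sub_apply]
            rw [sup_eq_left.mpr (by linarith)]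
          rw [this]; linarith
        · intro t ht
          have hnewi : (v ⊔ (u - fun _ => (u i - v i))) i = v i := by
            simp only [Pi.sup_apply, Pi.sub_apply]
            rw [sup_eq_left.mpr (by linarith)]
          rw [hnewi]
          rcases Finset.mem_insert.mp ht with rfl | ht'
          · have : v t ≤ (v ⊔ (u - fun _ => (u i - v i))) t := by
              simp only [Pi.sup_apply, Pi.sub_apply]; exact le_sup_left
            linarith
          · have : u t - (u i - v i) ≤ (v ⊔ (u - fun _ => (u i - v i))) t := by
              simp only [Pi.sup_apply, Pi.sub_apply]; exact le_sup_right
            have h2 := hud t ht'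
            linarith
  obtain ⟨u, hu, hui, hud⟩ := key Finset.univ
  exact ⟨u, hu, hui, fun t => hud t (Finset.mem_univ t)⟩

/-- Core: a point satisfying all tight constraints is in the closure of Q. -/
lemma mem_of_tight_constraints {Q : Set (Fin n → ℝ)} (hQcl : IsClosed Q)
    (hne : Q.Nonempty)
    (hmeet : ∀ p ∈ Q, ∀ q ∈ Q, ∀ μ : ℝ, 0 ≤ μ → (p + fun _ => μ) ⊓ q ∈ Q)
    (hjoin : ∀ p ∈ Q, ∀ q ∈ Q, ∀ μ : ℝ, 0 ≤ μ → p ⊔ (q - fun _ => μ) ∈ Q)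
    (hsup : ∀ p ∈ Q, ∀ q ∈ Q, p ⊔ q ∈ Q)
    (y : Fin n → ℝ)
    (Hpair : ∀ δ : ℝ, 0 < δ → ∀ i t : Fin n, ∃ v ∈ Q, y t - y i - δ ≤ v t - v i)
    (Hlow : ∀ δ : ℝ, 0 < δ → ∀ i, ∃ v ∈ Q, y i - δ ≤ v i)
    (Hhigh : ∀ δ : ℝ, 0 < δ → ∀ i, ∃ v ∈ Q, v i ≤ y i + δ) :
    y ∈ Q := by
  have approx : ∀ δ : ℝ, 0 < δ → ∃ w ∈ Q, ∀ t, |w t - y t| ≤ δ := by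
    intro δ hδ
    -- step 1 : a point above y - δ
    have step1 : ∃ z ∈ Q, ∀ t, y t - δ ≤ z t := by
      have := Hlow δ hδ
      -- combine via sup-closure
      have key : ∀ I : Finset (Fin n), ∃ z ∈ Q, ∀ t ∈ I, y t - δ ≤ z t := by
        intro I
        induction I using Finset.induction_on with
        | empty => obtain ⟨z, hz⟩ := hne; exact ⟨z, hz, fun t ht => absurd ht (by simp)⟩
        | insert _ _ hnotmem ih =>
          obtain ⟨z, hz, hzle⟩ := ih
          rename_i t0 I'
          obtain ⟨w, hw, hwt⟩ := Hlow δ hδ t0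
          refine ⟨z ⊔ w, hsup z hz w hw, fun t ht => ?_⟩
          rcases Finset.mem_insert.mp ht with rfl | ht'
          · exact hwt.trans (by rw [Pi.sup_apply]; exact le_sup_right)
          · exact (hzle t ht').trans (by rw [Pi.sup_apply]; exact le_sup_left)
      obtain ⟨z, hz, hzle⟩ := key Finset.univ
      exact ⟨z, hz, fun t => hzle t (Finset.mem_univ t)⟩
    obtain ⟨z0, hz0, hz0ge⟩ := step1
    -- step 2 : cut down coordinates one at a time
    have step2 : ∀ I : Finset (Fin n), ∃ c ∈ Q,
        (∀ t, y t - δ ≤ c t) ∧ (∀ i ∈ I, c i ≤ y i + δ) := by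
      intro I
      induction I using Finset.induction_on with
      | empty => exact ⟨z0, hz0, hz0ge, fun i hi => absurd hi (by simp)⟩
      | insert _ _ hnotmem ih =>
        obtain ⟨c, hc, hcge, hcle⟩ := ih
        rename_i i0 I'
        obtain ⟨u, hu, hui, hud⟩ := lemW hjoin y Hpair Hhigh hδ i0
        set μ := y i0 + δ - u i0 with hμdef
        have hμ : 0 ≤ μ := by simp only [hμdef]; linarith
        refine ⟨(u + fun _ => μ) ⊓ c, hmeet u hu c hc μ hμ, ?_, ?_⟩
        · intro t
          have h1 : y t ≤ u t + μ := by
            have := hud t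
            simp only [hμdef]
            linarith
          simp only [Pi.inf_apply, Pi.add_apply]
          rw [le_inf_iff]
          exact ⟨by linarith, hcge t⟩
        · intro i hi
          rcases Finset.mem_insert.mp hi with rfl | hi'
          · simp only [Pi.inf_apply, Pi.add_apply]
            have : u i + μ = y i + δ := by simp only [hμdef]; ring
            exact inf_le_left.trans_eq this
          · simp only [Pi.inf_apply, Pi.add_apply]
            exact inf_le_right.trans (hcle i hi')
    obtain ⟨c, hc, hcge, hcle⟩ := step2 Finset.univ
    refine ⟨c, hc, fun t => abs_le.mpr ⟨by linarith [hcge t], by linarith [hcle t (Finset.mem_univ t)]⟩⟩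
  rw [← hQcl.closure_eq]
  rcases hne with ⟨z, hz⟩
  rw [Metric.mem_closure_iff]
  intro ε hε
  obtain ⟨w, hw, hwle⟩ := approx (ε / 2) (by linarith)
  refine ⟨w, hw, ?_⟩
  rw [dist_pi_lt_iff hε]
  intro i
  rw [Real.dist_eq]
  have := hwle i
  rw [abs_sub_comm] at this
  linarith [abs_nonneg (y i - w i)]


lemma L1 (a1 a2 b1 b2 : ℝ) : max a1 a2 - max b1 b2 ≤ max (a1 - b1) (a2 - b2) := by
  rcases max_cases a1 a2 with ⟨h1, _⟩ | ⟨h1, _⟩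
  · rw [h1]; exact le_trans (by linarith [le_max_left b1 b2]) (le_max_left _ _)
  · rw [h1]; exact le_trans (by linarith [le_max_right b1 b2]) (le_max_right _ _)

lemma L2 (a1 a2 b1 b2 : ℝ) : min (a1 - b1) (a2 - b2) ≤ max a1 a2 - max b1 b2 := by
  rcases max_cases b1 b2 with ⟨h1, _⟩ | ⟨h1, _⟩
  · rw [h1]; exact le_trans (min_le_left _ _) (by linarith [le_max_left a1 a2])
  · rw [h1]; exact le_trans (min_le_right _ _) (by linarith [le_max_right a1 a2])

lemma L3 (a1 a2 b1 b2 : ℝ) : min a1 a2 - min b1 b2 ≤ max (a1 - b1) (a2 - b2) := by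
  rcases min_cases b1 b2 with ⟨h1, _⟩ | ⟨h1, _⟩
  · rw [h1]; exact le_trans (by linarith [min_le_left a1 a2]) (le_max_left _ _)
  · rw [h1]; exact le_trans (by linarith [min_le_right a1 a2]) (le_max_right _ _)

lemma L4 (a1 a2 b1 b2 : ℝ) : min (a1 - b1) (a2 - b2) ≤ min a1 a2 - min b1 b2 := by
  rcases min_cases a1 a2 with ⟨h1, _⟩ | ⟨h1, _⟩
  · rw [h1]; exact le_trans (min_le_left _ _) (by linarith [min_le_left b1 b2])
  · rw [h1]; exact le_trans (min_le_right _ _) (by linarith [min_le_right b1 b2])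

lemma ecoe_mono {A B : ℝ} (h : A ≤ B) : (↑A : EReal) ≤ ↑B := EReal.coe_le_coe_iff.mpr h

/-- sets defined by two-sided EReal bounds on coordinate differences -/
def diffSet {N k : ℕ} (u v : Fin k → Fin N) (a b : Fin k → EReal) : Set (Fin N → ℝ) :=
  {z | ∀ i, a i ≤ (↑(z (u i) - z (v i)) : EReal) ∧ (↑(z (u i) - z (v i)) : EReal) ≤ b i}

lemma diffSet_isPolyhedron {N k : ℕ} (u v : Fin k → Fin N) (a b : Fin k → EReal)
    (ha : ∀ i, a i ≠ ⊤) (hb : ∀ i, b i ≠ ⊥) (huv : ∀ i, u i ≠ v i) :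
    IsPolyhedron (diffSet u v a b) := by
  have heq : diffSet u v a b = {x : Fin N → ℝ |
      ∀ i, a i ≤ (↑(∑ j, ((if j = u i then (1:ℝ) else 0) + (if j = v i then -1 else 0)) * x j) : EReal)
        ∧ (↑(∑ j, ((if j = u i then (1:ℝ) else 0) + (if j = v i then -1 else 0)) * x j) : EReal) ≤ b i} := by
    have hsum : ∀ (x : Fin N → ℝ) (i : Fin k),
        ∑ j, ((if j = u i then (1:ℝ) else 0) + (if j = v i then -1 else 0)) * x j
          = x (u i) - x (v i) := by
      intro x i
      have : ∀ j, ((if j = u i then (1:ℝ) else 0) + (if j = v i then -1 else 0)) * x j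
          = (if j = u i then x j else 0) + (if j = v i then -(x j) else 0) := by
        intro j
        split_ifs <;> ring
      rw [Finset.sum_congr rfl fun j _ => this j, Finset.sum_add_distrib]
      rw [Finset.sum_ite_eq' Finset.univ (u i) x, if_pos (Finset.mem_univ _)]
      rw [Finset.sum_ite_eq' Finset.univ (v i) (fun j => -(x j)), if_pos (Finset.mem_univ _)]
      ring
    ext x
    simp only [diffSet, Set.mem_setOf_eq]
    constructor
    · intro hx i; rw [hsum x i]; exact hx i
    · intro hx i; have := hx i; rwa [hsum x i] at this
  rw [heq]
  exact isPolyhedron_of_bounds _ a b ha hb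

lemma diffSet_lconvex {N k : ℕ} (u v : Fin k → Fin N) (a b : Fin k → EReal)
    (ha : ∀ i, a i ≠ ⊤) (hb : ∀ i, b i ≠ ⊥) (huv : ∀ i, u i ≠ v i)
    (hne : (diffSet u v a b).Nonempty) : IsLConvexPoly (diffSet u v a b) := by
  refine ⟨diffSet_isPolyhedron u v a b ha hb huv, hne, ?_, ?_⟩
  · intro z hz w hw
    constructor
    · intro i
      obtain ⟨hz1, hz2⟩ := hz i
      obtain ⟨hw1, hw2⟩ := hw i
      have hD : (z ⊔ w) (u i) - (z ⊔ w) (v i)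
          = max (z (u i)) (w (u i)) - max (z (v i)) (w (v i)) := by
        simp only [Pi.sup_apply]
      constructor
      · rw [hD]
        refine le_trans ?_ (ecoe_mono (L2 _ _ _ _))
        rcases min_cases (z (u i) - z (v i)) (w (u i) - w (v i)) with ⟨hm, _⟩ | ⟨hm, _⟩
        · rw [hm]; exact hz1
        · rw [hm]; exact hw1
      · rw [hD]
        refine le_trans (ecoe_mono (L1 _ _ _ _)) ?_
        rcases max_cases (z (u i) - z (v i)) (w (u i) - w (v i)) with ⟨hm, _⟩ | ⟨hm, _⟩
        · rw [hm]; exact hz2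
        · rw [hm]; exact hw2
    · intro i
      obtain ⟨hz1, hz2⟩ := hz i
      obtain ⟨hw1, hw2⟩ := hw i
      have hD : (z ⊓ w) (u i) - (z ⊓ w) (v i)
          = min (z (u i)) (w (u i)) - min (z (v i)) (w (v i)) := by
        simp only [Pi.inf_apply]
      constructor
      · rw [hD]
        refine le_trans ?_ (ecoe_mono (L4 _ _ _ _))
        rcases min_cases (z (u i) - z (v i)) (w (u i) - w (v i)) with ⟨hm, _⟩ | ⟨hm, _⟩
        · rw [hm]; exact hz1
        · rw [hm]; exact hw1
      · rw [hD]
        refine le_trans (ecoe_mono (L3 _ _ _ _)) ?_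
        rcases max_cases (z (u i) - z (v i)) (w (u i) - w (v i)) with ⟨hm, _⟩ | ⟨hm, _⟩
        · rw [hm]; exact hz2
        · rw [hm]; exact hw2
  · intro z hz μ i
    have h := hz i
    simp only [diffSet, Set.mem_setOf_eq, Pi.add_apply]
    rw [show z (u i) + μ - (z (v i) + μ) = z (u i) - z (v i) by ring]
    exact h


def box (a b : Fin n → EReal) : Set (Fin n → ℝ) :=
  {x : Fin n → ℝ | ∀ i, a i ≤ (x i : EReal) ∧ (x i : EReal) ≤ b i}

noncomputable def pick (a b : Fin n → EReal) : Fin n → ℝ := fun i =>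
  if a i = ⊥ then (if b i = ⊤ then 0 else (b i).toReal) else (a i).toReal

lemma pick_mem (a b : Fin n → EReal) (ha : ∀ i, a i ≠ ⊤) (hb : ∀ i, b i ≠ ⊥)
    (hab : ∀ i, a i ≤ b i) : pick a b ∈ box a b := by
  intro i
  rw [pick]
  by_cases h1 : a i = ⊥
  · rw [if_pos h1]
    by_cases h2 : b i = ⊤
    · rw [if_pos h2, h1, h2]; exact ⟨bot_le, le_top⟩
    · rw [if_neg h2, h1, EReal.coe_toReal h2 (hb i)]
      exact ⟨bot_le, le_rfl⟩
  · rw [if_neg h1, EReal.coe_toReal (ha i) h1]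
    exact ⟨le_rfl, hab i⟩

lemma box_isPolyhedron (a b : Fin n → EReal) (ha : ∀ i, a i ≠ ⊤) (hb : ∀ i, b i ≠ ⊥) :
    IsPolyhedron (box a b) := by
  have heq : box a b = {x : Fin n → ℝ |
      ∀ i, a i ≤ (↑(∑ j, (if j = i then (1:ℝ) else 0) * x j) : EReal)
        ∧ (↑(∑ j, (if j = i then (1:ℝ) else 0) * x j) : EReal) ≤ b i} := by
    have hsum : ∀ (x : Fin n → ℝ) (i : Fin n),
        ∑ j, (if j = i then (1:ℝ) else 0) * x j = x i := by
      intro x i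
      have : ∀ j, (if j = i then (1:ℝ) else 0) * x j = if j = i then x j else 0 := by
        intro j; split_ifs <;> ring
      rw [Finset.sum_congr rfl fun j _ => this j,
        Finset.sum_ite_eq' Finset.univ i x, if_pos (Finset.mem_univ _)]
    ext x
    simp only [box, Set.mem_setOf_eq]
    constructor
    · intro hx i; rw [hsum x i]; exact hx i
    · intro hx i; have := hx i; rwa [hsum x i] at this
  rw [heq]
  exact isPolyhedron_of_bounds _ a b ha hb

/-- The box is L♮-convex. -/
lemma box_lnat (a b : Fin n → EReal) (ha : ∀ i, a i ≠ ⊤) (hb : ∀ i, b i ≠ ⊥)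
    (hab : ∀ i, a i ≤ b i) : IsLNatConvexPoly (box a b) := by
  refine ⟨box_isPolyhedron a b ha hb,
    diffSet (fun i => Fin.castSucc i) (fun _ => Fin.last n) a b, ?_, ?_⟩
  · refine diffSet_lconvex _ _ a b ha hb (fun i => (Fin.castSucc_lt_last i).ne) ?_
    refine ⟨Fin.snoc (pick a b) 0, fun i => ?_⟩
    simp only [Fin.snoc_castSucc, Fin.snoc_last, sub_zero]
    exact pick_mem a b ha hb hab i
  · ext x
    simp only [box, diffSet, Set.mem_setOf_eq, Fin.snoc_castSucc, Fin.snoc_last, sub_zero]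

def prevIdx (i : Fin n) : Fin (n + 1) :=
  if h : (i : ℕ) = 0 then Fin.last n else Fin.castSucc ⟨(i : ℕ) - 1, by omega⟩

lemma castSucc_ne_prevIdx (i : Fin n) : Fin.castSucc i ≠ prevIdx i := by
  rw [prevIdx]
  split_ifs with h
  · exact (Fin.castSucc_lt_last i).ne
  · intro hEq
    have := congrArg Fin.val hEq
    simp only [Fin.coe_castSucc] at this
    omega

lemma snoc_diff (y : Fin n → ℝ) (i : Fin n) :
    (Fin.snoc y (0:ℝ) : Fin (n+1) → ℝ) (Fin.castSucc i)
      - (Fin.snoc y (0:ℝ) : Fin (n+1) → ℝ) (prevIdx i) = dvec y i := by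
  by_cases h : (i : ℕ) = 0
  · rw [prevIdx, dif_pos h, dvec, dif_pos h]
    simp only [Fin.snoc_castSucc, Fin.snoc_last]
  · rw [prevIdx, dif_neg h, dvec, dif_neg h]
    simp only [Fin.snoc_castSucc]

/-- preimage of the box under D -/
def Qb (a b : Fin n → EReal) : Set (Fin n → ℝ) :=
  {y : Fin n → ℝ | ∀ i, a i ≤ (↑(dvec y i) : EReal) ∧ (↑(dvec y i) : EReal) ≤ b i}

lemma matD_apply_sum (y : Fin n → ℝ) (i : Fin n) :
    ∑ j, matD n i j * y j = dvec y i := congrFun (mulVec_matD y) i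

lemma Qb_isPolyhedron (a b : Fin n → EReal) (ha : ∀ i, a i ≠ ⊤) (hb : ∀ i, b i ≠ ⊥) :
    IsPolyhedron (Qb a b) := by
  have heq : Qb a b = {y : Fin n → ℝ |
      ∀ i, a i ≤ (↑(∑ j, matD n i j * y j) : EReal)
        ∧ (↑(∑ j, matD n i j * y j) : EReal) ≤ b i} := by
    ext y
    simp only [Qb, Set.mem_setOf_eq]
    constructor
    · intro hy i; rw [matD_apply_sum y i]; exact hy i
    · intro hy i; have := hy i; rwa [matD_apply_sum y i] at this
  rw [heq]
  exact isPolyhedron_of_bounds _ a b ha hb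

lemma Qb_lnat (a b : Fin n → EReal) (ha : ∀ i, a i ≠ ⊤) (hb : ∀ i, b i ≠ ⊥)
    (hab : ∀ i, a i ≤ b i) : IsLNatConvexPoly (Qb a b) := by
  refine ⟨Qb_isPolyhedron a b ha hb,
    diffSet (fun i => Fin.castSucc i) prevIdx a b, ?_, ?_⟩
  · refine diffSet_lconvex _ _ a b ha hb castSucc_ne_prevIdx ?_
    refine ⟨Fin.snoc (psum (pick a b)) 0, fun i => ?_⟩
    rw [snoc_diff, congrFun (dvec_psum (pick a b)) i]
    exact pick_mem a b ha hb hab i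
  · ext y
    simp only [Qb, diffSet, Set.mem_setOf_eq]
    constructor
    · intro hy i; rw [snoc_diff]; exact hy i
    · intro hy i; have := hy i; rwa [snoc_diff] at this

lemma image_Qb (a b : Fin n → EReal) :
    (matD n).mulVec '' Qb a b = box a b := by
  ext x
  constructor
  · rintro ⟨y, hy, rfl⟩
    intro i
    rw [show (matD n).mulVec y i = dvec y i from congrFun (mulVec_matD y) i]
    exact hy i
  · intro hx
    refine ⟨psum x, fun i => ?_, ?_⟩
    · rw [congrFun (dvec_psum x) i]; exact hx i
    · rw [mulVec_matD, dvec_psum]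

/-- forward : a box is multimodular -/
lemma box_multimodular (a b : Fin n → EReal) (ha : ∀ i, a i ≠ ⊤) (hb : ∀ i, b i ≠ ⊥)
    (hab : ∀ i, a i ≤ b i) : IsMultimodularPoly (box a b) :=
  ⟨Qb a b, Qb_lnat a b ha hb hab, (image_Qb a b).symm⟩

/-- forward : a box is L₂♮-convex -/
lemma box_l2nat (a b : Fin n → EReal) (ha : ∀ i, a i ≠ ⊤) (hb : ∀ i, b i ≠ ⊥)
    (hab : ∀ i, a i ≤ b i) : IsL2NatConvexPoly (box a b) := by
  refine ⟨box_isPolyhedron a b ha hb, box a b,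
    box (fun _ => ((0:ℝ) : EReal)) (fun _ => ((0:ℝ) : EReal)),
    box_lnat a b ha hb hab,
    box_lnat _ _ (fun _ => EReal.coe_ne_top 0) (fun _ => EReal.coe_ne_bot 0) (fun _ => le_rfl),
    ?_⟩
  ext x
  constructor
  · intro hx
    refine Set.mem_add.mpr ⟨x, hx, 0, fun i => ?_, by simp⟩
    constructor <;> simp [Pi.zero_apply]
  · intro hx
    obtain ⟨p, hp, q, hq, rfl⟩ := Set.mem_add.mp hx
    have hq0 : q = 0 := by
      funext i
      have h1 := (hq i).1
      have h2 := (hq i).2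
      exact le_antisymm (EReal.coe_le_coe_iff.mp h2) (EReal.coe_le_coe_iff.mp h1)
    rw [hq0, add_zero]
    exact hp


/-- Backward: an L₂♮-convex multimodular polyhedron is a box. -/
lemma backward {P : Set (Fin n → ℝ)} (h2 : IsL2NatConvexPoly P)
    (hmm : IsMultimodularPoly P) : IsRealBox P := by
  obtain ⟨hPpoly, P₁, P₂, hP₁, hP₂, hsum⟩ := h2
  obtain ⟨Q, hQ, hPDQ⟩ := hmm
  -- the tight coordinate bounds
  set a : Fin n → EReal := fun i => ⨅ p ∈ P, ((p i : ℝ) : EReal) with ha_def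
  set b : Fin n → EReal := fun i => ⨆ p ∈ P, ((p i : ℝ) : EReal) with hb_def
  have hPne : P.Nonempty := by
    obtain ⟨p1, hp1⟩ := lnat_nonempty hP₁
    obtain ⟨p2, hp2⟩ := lnat_nonempty hP₂
    exact ⟨p1 + p2, hsum ▸ Set.add_mem_add hp1 hp2⟩
  obtain ⟨p0, hp0⟩ := hPne
  have hale : ∀ (p : Fin n → ℝ), p ∈ P → ∀ i, a i ≤ ↑(p i) := by
    intro p hp i
    exact iInf₂_le p hp
  have hble : ∀ (p : Fin n → ℝ), p ∈ P → ∀ i, (↑(p i) : EReal) ≤ b i := by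
    intro p hp i
    exact le_iSup₂ (f := fun p (_ : p ∈ P) => ((p i : ℝ) : EReal)) p hp
  refine ⟨a, b, ?_, ?_, ?_, ?_⟩
  · intro i
    exact fun htop => (EReal.coe_ne_top (p0 i)) (top_le_iff.mp (htop ▸ hale p0 hp0 i))
  · intro i
    exact fun hbot => (EReal.coe_ne_bot (p0 i)) (le_bot_iff.mp (hbot ▸ hble p0 hp0 i))
  · intro i
    exact (hale p0 hp0 i).trans (hble p0 hp0 i)
  ext x
  constructor
  · intro hx i
    exact ⟨hale x hx i, hble x hx i⟩
  · intro hx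
    simp only [Set.mem_setOf_eq] at hx
    -- simultaneous approximate witnesses from below and above
    have wit_low : ∀ ε : ℝ, 0 < ε → ∃ p ∈ P, ∀ t, x t - ε ≤ p t := by
      intro ε hε
      have percoord : ∀ t, ∃ p ∈ P, x t - ε ≤ p t := by
        intro t
        have h1 : (↑(x t - ε) : EReal) < b t :=
          lt_of_lt_of_le (EReal.coe_lt_coe_iff.mpr (by linarith)) (hx t).2
        rw [hb_def] at h1
        obtain ⟨p, hp1⟩ := lt_iSup_iff.mp h1
        obtain ⟨hpP, hp2⟩ := lt_iSup_iff.mp hp1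
        exact ⟨p, hpP, le_of_lt (EReal.coe_lt_coe_iff.mp hp2)⟩
      choose w hwP hwge using percoord
      have hdec : ∀ t, ∃ p1 ∈ P₁, ∃ p2 ∈ P₂, p1 + p2 = w t := by
        intro t
        exact Set.mem_add.mp (hsum ▸ hwP t)
      choose w1 hw1 w2 hw2 hwsum using hdec
      obtain ⟨q1, hq1, hq1ge⟩ := exists_ge_of_sup_closed (lnat_nonempty hP₁)
        (lnat_sup_mem hP₁) (fun t => w1 t t) (fun t => ⟨w1 t, hw1 t, le_rfl⟩)
      obtain ⟨q2, hq2, hq2ge⟩ := exists_ge_of_sup_closed (lnat_nonempty hP₂)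
        (lnat_sup_mem hP₂) (fun t => w2 t t) (fun t => ⟨w2 t, hw2 t, le_rfl⟩)
      refine ⟨q1 + q2, hsum ▸ Set.add_mem_add hq1 hq2, fun t => ?_⟩
      have h3 : w1 t t + w2 t t = w t t := by rw [← hwsum t]; rfl
      have h4 := hwge t
      have h5 := hq1ge t
      have h6 := hq2ge t
      simp only [Pi.add_apply]
      linarith
    have wit_high : ∀ ε : ℝ, 0 < ε → ∃ p ∈ P, ∀ t, p t ≤ x t + ε := by
      intro ε hε
      have percoord : ∀ t, ∃ p ∈ P, p t ≤ x t + ε := by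
        intro t
        have h1 : a t < (↑(x t + ε) : EReal) :=
          lt_of_le_of_lt (hx t).1 (EReal.coe_lt_coe_iff.mpr (by linarith))
        rw [ha_def] at h1
        obtain ⟨p, hp1⟩ := iInf_lt_iff.mp h1
        obtain ⟨hpP, hp2⟩ := iInf_lt_iff.mp hp1
        exact ⟨p, hpP, le_of_lt (EReal.coe_lt_coe_iff.mp hp2)⟩
      choose w hwP hwge using percoord
      have hdec : ∀ t, ∃ p1 ∈ P₁, ∃ p2 ∈ P₂, p1 + p2 = w t := by
        intro t
        exact Set.mem_add.mp (hsum ▸ hwP t)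
      choose w1 hw1 w2 hw2 hwsum using hdec
      obtain ⟨q1, hq1, hq1ge⟩ := exists_le_of_inf_closed (lnat_nonempty hP₁)
        (lnat_inf_mem hP₁) (fun t => w1 t t) (fun t => ⟨w1 t, hw1 t, le_rfl⟩)
      obtain ⟨q2, hq2, hq2ge⟩ := exists_le_of_inf_closed (lnat_nonempty hP₂)
        (lnat_inf_mem hP₂) (fun t => w2 t t) (fun t => ⟨w2 t, hw2 t, le_rfl⟩)
      refine ⟨q1 + q2, hsum ▸ Set.add_mem_add hq1 hq2, fun t => ?_⟩
      have h3 : w1 t t + w2 t t = w t t := by rw [← hwsum t]; rfl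
      have h4 := hwge t
      have h5 := hq1ge t
      have h6 := hq2ge t
      simp only [Pi.add_apply]
      linarith
    -- lift P-witnesses into Q
    have toQ : ∀ p ∈ P, psum p ∈ Q := by
      intro p hp
      rw [hPDQ] at hp
      obtain ⟨q, hq, hqe⟩ := hp
      have : psum p = q := by rw [← hqe, mulVec_matD, psum_dvec]
      rwa [this]
    set y : Fin n → ℝ := psum x with hy_def
    have hops := lnat_ops hQ
    have hyQ : y ∈ Q := by
      refine mem_of_tight_constraints (isClosed_of_isPolyhedron hQ.1) (lnat_nonempty hQ)
        (fun p hp q hq μ hμ => (hops p hp q hq μ hμ).1)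
        (fun p hp q hq μ hμ => (hops p hp q hq μ hμ).2)
        (lnat_sup_mem hQ) y ?_ ?_ ?_
      all_goals intro δ hδ
      case _ => -- Hpair
        intro i t
        set ε : ℝ := δ / (n + 1) with hε_def
        have hεpos : 0 < ε := by positivity
        have hkey : (n : ℝ) * ε ≤ δ := by
          have hpos : (0:ℝ) < (n:ℝ) + 1 := by positivity
          rw [hε_def, ← mul_div_assoc, div_le_iff₀ hpos]
          nlinarith [Nat.cast_nonneg (α := ℝ) n]
        rcases le_total i t with hit | hti
        · obtain ⟨p, hpP, hpge⟩ := wit_low ε hεpos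
          refine ⟨psum p, toQ p hpP, ?_⟩
          have := psum_sub_ge hεpos.le hpge hit
          rw [hy_def]
          linarith
        · obtain ⟨q, hqP, hqle⟩ := wit_high ε hεpos
          refine ⟨psum q, toQ q hqP, ?_⟩
          have := psum_sub_ge hεpos.le (fun j => by linarith [hqle j] : ∀ j, q j - ε ≤ x j) hti
          rw [hy_def]
          linarith
      case _ => -- Hlow
        intro i
        set ε : ℝ := δ / (n + 1) with hε_def
        have hεpos : 0 < ε := by positivity
        have hkey : (n : ℝ) * ε ≤ δ := by
          have hpos : (0:ℝ) < (n:ℝ) + 1 := by positivity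
          rw [hε_def, ← mul_div_assoc, div_le_iff₀ hpos]
          nlinarith [Nat.cast_nonneg (α := ℝ) n]
        obtain ⟨p, hpP, hpge⟩ := wit_low ε hεpos
        refine ⟨psum p, toQ p hpP, ?_⟩
        have := psum_ge hεpos.le hpge i
        rw [hy_def]
        linarith
      case _ => -- Hhigh
        intro i
        set ε : ℝ := δ / (n + 1) with hε_def
        have hεpos : 0 < ε := by positivity
        have hkey : (n : ℝ) * ε ≤ δ := by
          have hpos : (0:ℝ) < (n:ℝ) + 1 := by positivity
          rw [hε_def, ← mul_div_assoc, div_le_iff₀ hpos]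
          nlinarith [Nat.cast_nonneg (α := ℝ) n]
        obtain ⟨q, hqP, hqle⟩ := wit_high ε hεpos
        refine ⟨psum q, toQ q hqP, ?_⟩
        have := psum_ge hεpos.le (fun j => by linarith [hqle j] : ∀ j, q j - ε ≤ x j) i
        rw [hy_def]
        linarith
    rw [hPDQ]
    exact ⟨y, hyQ, by rw [hy_def, mulVec_matD, dvec_psum]⟩

end RBAux

/-- A polyhedron is a box of reals iff it is both L₂♮-convex and
multimodular. -/
theorem realBox_iff_L2nat_and_multimodular_poly {n : ℕ} (P : Set (Fin n → ℝ)) :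
    IsRealBox P ↔ IsL2NatConvexPoly P ∧ IsMultimodularPoly P := by
  constructor
  · rintro ⟨a, b, ha, hb, hab, rfl⟩
    exact ⟨RBAux.box_l2nat a b ha hb hab, RBAux.box_multimodular a b ha hb hab⟩
  · rintro ⟨h2, hmm⟩
    exact RBAux.backward h2 hmm
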